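/- For any sequence z^N over an m-ary alphabet with symbol counts N_1,...,N_m summing to N, and any probability vector (θ_1,...,θ_m), the Laplace probability assignment satisfies log(1/q_L(z^N)) ≤ m·log(2eN) + Σ_{i=1}^m N_i·log(1/θ_i), where q_L(z^N) = (N_1!···N_m!/N!)·(1/binom(N+m-1,m-1)). -/

import Mathlib

lemma choose_le_pow_aux (N : ℕ) : ∀ k : ℕ, (N + k).choose k ≤ (N + 1) ^ k := by
  intro k
  induction k with
  | zero => simp
  | succ k ih =>
    have h2 : (N + k + 1).choose (k + 1) * (k + 1) = (N + k + 1) * (N + k).choose k :=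
      (Nat.add_one_mul_choose_eq (N + k) k).symm
    have h3 : (N + k + 1).choose (k + 1) * (k + 1) ≤ ((N + 1) ^ (k + 1)) * (k + 1) := by
      rw [h2]
      calc (N + k + 1) * (N + k).choose k ≤ ((k + 1) * (N + 1)) * ((N + 1) ^ k) :=
            Nat.mul_le_mul (by nlinarith) ih
        _ = ((N + 1) ^ (k + 1)) * (k + 1) := by ring
    have h4 := Nat.le_of_mul_le_mul_right h3 (Nat.succ_pos k)
    have h5 : N + (k + 1) = N + k + 1 := by omega
    rw [h5]
    exact h4

lemma multinomial_mul_prod_le_one (m N : ℕ) (Nc : Fin m → ℕ) (hsum : ∑ i, Nc i = N)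
    (θ : Fin m → ℝ) (hθ0 : ∀ i, 0 ≤ θ i) (hθ1 : ∑ i, θ i = 1) :
    (Nat.multinomial Finset.univ Nc : ℝ) * ∏ i, θ i ^ Nc i ≤ 1 := by
  have h := Finset.sum_pow_eq_sum_piAntidiag (Finset.univ : Finset (Fin m)) θ N
  rw [hθ1, one_pow] at h
  rw [h]
  refine Finset.single_le_sum (f := fun k => (Nat.multinomial Finset.univ k : ℝ) * ∏ i, θ i ^ k i)
    (fun k _ => ?_) ?_
  · have : 0 ≤ ∏ i, θ i ^ k i := Finset.prod_nonneg fun i _ => pow_nonneg (hθ0 i) _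
    positivity
  · simp [Finset.mem_piAntidiag, hsum]

/-- For any sequence with symbol counts `Nc` summing to `N` and any probability
vector `θ` (positive on symbols that actually occur), the Laplace probability assignment
satisfies `log(1/q_L(z^N)) ≤ m·log(2eN) + Σ_i N_i·log(1/θ_i)`. -/
theorem laplace_pointwise_length_bound (m : ℕ) (hm : 2 ≤ m) (Nc : Fin m → ℕ)
    (N : ℕ) (hN : 0 < N) (hsum : ∑ i, Nc i = N)
    (θ : Fin m → ℝ) (hθ0 : ∀ i, 0 ≤ θ i) (hθ1 : ∑ i, θ i = 1)
    (hθpos : ∀ i, Nc i ≠ 0 → 0 < θ i) :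
    Real.logb 2 (1 /
        (((∏ i, Nat.factorial (Nc i) : ℕ) : ℝ) / (Nat.factorial N : ℝ)
          * (1 / (Nat.choose (N + m - 1) (m - 1) : ℝ))))
      ≤ (m : ℝ) * Real.logb 2 (2 * Real.exp 1 * N)
        + ∑ i, (Nc i : ℝ) * Real.logb 2 (1 / θ i) := by
  set M : ℕ := Nat.multinomial Finset.univ Nc with hM
  set C : ℕ := Nat.choose (N + m - 1) (m - 1) with hC
  have hMspec : (∏ i, Nat.factorial (Nc i)) * M = Nat.factorial N := by
    have := Nat.multinomial_spec Finset.univ Nc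
    rwa [hsum] at this
  have hMpos : 0 < M := Nat.multinomial_pos _ _
  have hCpos : 0 < C := Nat.choose_pos (by omega)
  have hPpos : (0:ℝ) < ∏ i, Nat.factorial (Nc i) := by
    positivity
  have hNfpos : (0:ℝ) < Nat.factorial N := by positivity
  have hMr : (0:ℝ) < (M : ℝ) := by exact_mod_cast hMpos
  have hCr : (0:ℝ) < (C : ℝ) := by exact_mod_cast hCpos
  -- rewrite the argument of logb
  have harg : (1 : ℝ) /
      (((∏ i, Nat.factorial (Nc i) : ℕ) : ℝ) / (Nat.factorial N : ℝ)
        * (1 / (C : ℝ))) = (M : ℝ) * (C : ℝ) := by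
    have hNf : (Nat.factorial N : ℝ) = ((∏ i, Nat.factorial (Nc i) : ℕ) : ℝ) * (M : ℝ) := by
      exact_mod_cast hMspec.symm
    rw [hNf]
    push_cast
    field_simp
  rw [harg, Real.logb_mul hMr.ne' hCr.ne']
  have he2 : (2:ℝ) ≤ Real.exp 1 := by
    have := Real.add_one_le_exp (1:ℝ); linarith
  have hNr : (1:ℝ) ≤ (N:ℝ) := by exact_mod_cast hN
  have ha1 : (1:ℝ) ≤ 2 * Real.exp 1 * N := by nlinarith
  -- bound on logb C
  have hCbound : Real.logb 2 (C : ℝ) ≤ (m : ℝ) * Real.logb 2 (2 * Real.exp 1 * N) := by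
    have hchoose : C ≤ (N + 1) ^ (m - 1) := by
      have h1 : N + m - 1 = N + (m - 1) := by omega
      rw [hC, h1]
      exact choose_le_pow_aux N (m - 1)
    have hCle : (C : ℝ) ≤ (2 * Real.exp 1 * N) ^ m := by
      calc (C : ℝ) ≤ ((N : ℝ) + 1) ^ (m - 1) := by exact_mod_cast hchoose
        _ ≤ (2 * Real.exp 1 * N) ^ (m - 1) := by
            apply pow_le_pow_left₀ (by linarith) (by nlinarith)
        _ ≤ (2 * Real.exp 1 * N) ^ m := pow_le_pow_right₀ ha1 (by omega)
    calc Real.logb 2 (C : ℝ) ≤ Real.logb 2 ((2 * Real.exp 1 * N) ^ m) :=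
          Real.logb_le_logb_of_le (by norm_num) hCr hCle
      _ = (m : ℝ) * Real.logb 2 (2 * Real.exp 1 * N) := by rw [Real.logb_pow]
  -- bound on logb M
  have hfac : ∀ i : Fin m, (0:ℝ) < θ i ^ Nc i := by
    intro i
    rcases Nat.eq_zero_or_pos (Nc i) with h | h
    · simp [h]
    · exact pow_pos (hθpos i h.ne') _
  have hprodpos : (0:ℝ) < ∏ i, θ i ^ Nc i := Finset.prod_pos fun i _ => hfac i
  have hMle : (M : ℝ) ≤ 1 / ∏ i, θ i ^ Nc i := by
    rw [le_div_iff₀ hprodpos]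
    exact multinomial_mul_prod_le_one m N Nc hsum θ hθ0 hθ1
  have hMbound : Real.logb 2 (M : ℝ) ≤ ∑ i, (Nc i : ℝ) * Real.logb 2 (1 / θ i) := by
    calc Real.logb 2 (M : ℝ) ≤ Real.logb 2 (1 / ∏ i, θ i ^ Nc i) :=
          Real.logb_le_logb_of_le (by norm_num) hMr hMle
      _ = - Real.logb 2 (∏ i, θ i ^ Nc i) := by rw [one_div, Real.logb_inv]
      _ = - ∑ i, Real.logb 2 (θ i ^ Nc i) := by
          rw [Real.logb_prod _ _ fun i _ => (hfac i).ne']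
      _ = ∑ i, (Nc i : ℝ) * Real.logb 2 (1 / θ i) := by
          rw [← Finset.sum_neg_distrib]
          refine Finset.sum_congr rfl fun i _ => ?_
          rw [Real.logb_pow, one_div, Real.logb_inv]
          ring
  linarith
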